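/- Let M be an m×n integer matrix. Then the order of the torsion subgroup of the cokernel ℤ^m / im(M) is at most the product over all columns of M of max(1, the Euclidean length of that column). -/

import Mathlib

open Matrix

lemma hadamard_aux {r : ℕ} (A : Matrix (Fin r) (Fin r) ℝ) :
    |A.det| ≤ ∏ j : Fin r, Real.sqrt (∑ i : Fin r, (A i j) ^ 2) := by
  have _i : Fact (Module.finrank ℝ (EuclideanSpace ℝ (Fin r)) = r) := ⟨finrank_euclideanSpace_fin⟩
  set b := EuclideanSpace.basisFun (Fin r) ℝ with hb
  set o := b.toBasis.orientation with ho
  set v : Fin r → EuclideanSpace ℝ (Fin r) := fun j => WithLp.toLp 2 (fun i => A i j) with hv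
  have h1 : |o.volumeForm v| = |b.toBasis.det v| := o.volumeForm_robust' b v
  have h2 : b.toBasis.det v = A.det := by
    rw [Module.Basis.det_apply]
    congr 1
  have h3 := o.abs_volumeForm_apply_le v
  rw [h1, h2] at h3
  refine h3.trans (le_of_eq ?_)
  refine Finset.prod_congr rfl fun j _ => ?_
  rw [EuclideanSpace.norm_eq]
  congr 1
  exact Finset.sum_congr rfl fun i _ => by rw [Real.norm_eq_abs, sq_abs]


lemma mulVecLin_injective_of_det_ne_zero {k : ℕ} {A : Matrix (Fin k) (Fin k) ℤ}
    (hA : A.det ≠ 0) : Function.Injective A.mulVecLin := by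
  rw [injective_iff_map_eq_zero]
  intro x hx
  have h : A.adjugate.mulVec (A.mulVec x) = A.det • x := by
    rw [Matrix.mulVec_mulVec, Matrix.adjugate_mul, Matrix.smul_mulVec, Matrix.one_mulVec]
  rw [show A.mulVecLin x = A.mulVec x from rfl] at hx
  rw [hx, Matrix.mulVec_zero] at h
  exact ((smul_eq_zero.mp h.symm).resolve_left hA)

lemma card_quot_mulVecLin {k : ℕ} (A : Matrix (Fin k) (Fin k) ℤ) (hA : A.det ≠ 0) :
    Nat.card ((Fin k → ℤ) ⧸ LinearMap.range A.mulVecLin) = A.det.natAbs := by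
  classical
  set N := LinearMap.range A.mulVecLin with hN
  have hinj := mulVecLin_injective_of_det_ne_zero hA
  obtain ⟨nn, snf⟩ := N.smithNormalForm (Pi.basisFun ℤ (Fin k))
  set e1 : (Fin k → ℤ) ≃ₗ[ℤ] N := LinearEquiv.ofInjective A.mulVecLin hinj with he1
  have hfr : Module.finrank ℤ N = k := by
    rw [← e1.finrank_eq, Module.finrank_pi, Fintype.card_fin]
  have hnn : nn = k := by
    have := Module.finrank_eq_card_basis snf.bN
    rw [hfr, Fintype.card_fin] at this
    exact this.symm
  subst hnn
  have hidx : Nat.card ((Fin nn → ℤ) ⧸ N) = ∏ i : Fin nn, (snf.a i).natAbs := by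
    have h := snf.toAddSubgroup_index_eq_pow_mul_prod
    have h0 : Nat.card ((Fin nn → ℤ) ⧸ N) = N.toAddSubgroup.index := rfl
    rw [h0, h, Fintype.card_fin, Nat.sub_self, pow_zero, one_mul]
    exact Finset.prod_congr rfl fun i _ => by
      rw [Ideal.span_singleton_toAddSubgroup_eq_zmultiples, Int.index_zmultiples]
  rw [hidx]
  have hbij : Function.Bijective snf.f := by
    rw [Fintype.bijective_iff_injective_and_card]
    exact ⟨snf.f.injective, by simp⟩
  set σ : Equiv.Perm (Fin nn) := Equiv.ofBijective snf.f hbij with hσ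
  set D : Matrix (Fin nn) (Fin nn) ℤ := (Matrix.diagonal snf.a).submatrix σ.symm id with hD
  have hdetD : D.det.natAbs = ∏ i : Fin nn, (snf.a i).natAbs := by
    have h : D.det = (Equiv.Perm.sign σ.symm : ℤ) * (Matrix.diagonal snf.a).det :=
      Matrix.det_permute σ.symm _
    rw [h, Int.natAbs_mul, Matrix.det_diagonal]
    have hp : (∏ i : Fin nn, snf.a i).natAbs = ∏ i : Fin nn, (snf.a i).natAbs :=
      map_prod Int.natAbsHom snf.a Finset.univ
    rw [hp]
    rcases Int.units_eq_one_or (Equiv.Perm.sign σ.symm) with h' | h' <;> simp [h']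
  rw [← hdetD]
  set bM := snf.bM with hbM
  set ψ : (Fin nn → ℤ) →ₗ[ℤ] (Fin nn → ℤ) := Matrix.toLin bM bM D with hψ
  have hψdet : LinearMap.det ψ = D.det := LinearMap.det_toLin bM D
  set e2 : (Fin nn → ℤ) ≃ₗ[ℤ] N := snf.bN.equivFun.symm with he2
  set ρ : (Fin nn → ℤ) ≃ₗ[ℤ] (Fin nn → ℤ) := bM.equivFun.symm with hρ
  have he2i : ∀ i, e2 (Pi.basisFun ℤ (Fin nn) i) = snf.bN i := by
    intro i
    rw [he2, LinearEquiv.symm_apply_eq]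
    ext j
    simp [Module.Basis.equivFun_apply, Pi.single_apply, eq_comm]
  have hρi : ∀ i, ρ (Pi.basisFun ℤ (Fin nn) i) = bM i := by
    intro i
    rw [hρ, LinearEquiv.symm_apply_eq]
    ext j
    simp [Module.Basis.equivFun_apply, Pi.single_apply, eq_comm]
  have hψbM : ∀ i, ψ (bM i) = snf.a i • bM (snf.f i) := by
    intro i
    rw [hψ, Matrix.toLin_self]
    rw [Finset.sum_eq_single (snf.f i)]
    · congr 1
      have : σ.symm (snf.f i) = i := by
        rw [show snf.f i = σ i from rfl, Equiv.symm_apply_apply]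
      simp [hD, Matrix.submatrix_apply, this]
    · intro b _ hb
      have hzero : D b i = 0 := by
        simp only [hD, Matrix.submatrix_apply, id_eq]
        rw [Matrix.diagonal_apply_ne]
        intro hc
        apply hb
        have h2 := congrArg σ hc
        rw [Equiv.apply_symm_apply] at h2
        exact h2
      rw [hzero, zero_smul]
    · simp
  have hcomp : N.subtype ∘ₗ (e2 : (Fin nn → ℤ) →ₗ[ℤ] N)
      = ψ ∘ₗ (ρ : (Fin nn → ℤ) →ₗ[ℤ] (Fin nn → ℤ)) := by
    apply (Pi.basisFun ℤ (Fin nn)).ext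
    intro i
    simp only [LinearMap.comp_apply, LinearEquiv.coe_coe]
    rw [he2i, hρi, hψbM]
    exact snf.snf i
  set u : (Fin nn → ℤ) ≃ₗ[ℤ] (Fin nn → ℤ) := e1.trans e2.symm with hu
  have hcomp2 : N.subtype ∘ₗ (e1 : (Fin nn → ℤ) →ₗ[ℤ] N)
      = (N.subtype ∘ₗ (e2 : (Fin nn → ℤ) →ₗ[ℤ] N)) ∘ₗ (u : (Fin nn → ℤ) →ₗ[ℤ] (Fin nn → ℤ)) := by
    apply LinearMap.ext
    intro x
    simp [hu]
  have hAcomp : A.mulVecLin = N.subtype ∘ₗ (e1 : (Fin nn → ℤ) →ₗ[ℤ] N) := by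
    apply LinearMap.ext
    intro x
    simp only [LinearMap.comp_apply, LinearEquiv.coe_coe, he1]
    rw [Submodule.coe_subtype, LinearEquiv.ofInjective_apply]
  have hdetA : LinearMap.det A.mulVecLin = A.det := by
    have : A.mulVecLin = Matrix.toLin' A := by
      apply LinearMap.ext; intro x; rw [Matrix.toLin'_apply]; rfl
    rw [this, LinearMap.det_toLin']
  have key : A.det = D.det * LinearMap.det (ρ : (Fin nn → ℤ) →ₗ[ℤ] (Fin nn → ℤ))
      * LinearMap.det (u : (Fin nn → ℤ) →ₗ[ℤ] (Fin nn → ℤ)) := by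
    rw [← hdetA, hAcomp, hcomp2, hcomp]
    rw [LinearMap.det_comp, LinearMap.det_comp, hψdet]
  rw [key, Int.natAbs_mul, Int.natAbs_mul]
  have h1 : (LinearMap.det (ρ : (Fin nn → ℤ) →ₗ[ℤ] (Fin nn → ℤ))).natAbs = 1 := by
    rcases Int.isUnit_iff.mp (LinearEquiv.isUnit_det' ρ) with h | h <;> simp [h]
  have h2 : (LinearMap.det (u : (Fin nn → ℤ) →ₗ[ℤ] (Fin nn → ℤ))).natAbs = 1 := by
    rcases Int.isUnit_iff.mp (LinearEquiv.isUnit_det' u) with h | h <;> simp [h]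
  rw [h1, h2, mul_one, mul_one]

/-- For an `m × n` integer matrix `M`, the order of the torsion subgroup of
the cokernel `ℤ^m / im(M)` is at most the product over the columns of `M` of
`max 1 (Euclidean length of the column)`. -/
theorem torsion_cokernel_le_prod_column_lengths (m n : ℕ) (M : Matrix (Fin m) (Fin n) ℤ) :
    (Nat.card ↥(Submodule.torsion ℤ ((Fin m → ℤ) ⧸ LinearMap.range M.mulVecLin)) : ℝ) ≤
      ∏ j : Fin n, max 1 (Real.sqrt (∑ i : Fin m, ((M i j : ℝ)) ^ 2)) := by
  classical
  set Q : Matrix (Fin m) (Fin n) ℚ := M.map (Int.cast : ℤ → ℚ) with hQdef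
  -- choose linearly independent rows spanning the row space
  obtain ⟨t, hts, htspan, htind⟩ := exists_linearIndependent ℚ (Set.range (fun i => Q i))
  haveI : Fintype t := (Set.Finite.subset (Set.finite_range _) hts).fintype
  set r := Fintype.card t with hr
  set e : Fin r ≃ t := (Fintype.equivFin t).symm with he
  set ρ : Fin r → Fin m := fun i => (hts (e i).2).choose with hρdef
  have hρQ : ∀ i, Q (ρ i) = ((e i : Fin n → ℚ)) := fun i => (hts (e i).2).choose_spec
  have hρinj : Function.Injective ρ := by
    intro i1 i2 h
    apply e.injective
    apply Subtype.ext
    rw [← hρQ, ← hρQ, h]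
  set B : Matrix (Fin r) (Fin n) ℚ := Q.submatrix ρ id with hBdef
  have hBrows : ∀ i, B i = Q (ρ i) := fun i => rfl
  have hrow_ind : LinearIndependent ℚ (fun i => B i) := by
    have : (fun i => B i) = (fun x : t => (x : Fin n → ℚ)) ∘ e := by
      funext i; rw [hBrows, hρQ]; rfl
    rw [this]
    exact htind.comp e e.injective
  have hrow_range : Set.range (fun i => B i) = t := by
    have : (fun i => B i) = (fun x : t => (x : Fin n → ℚ)) ∘ e := by
      funext i; rw [hBrows, hρQ]; rfl
    rw [this, Set.range_comp, Equiv.range_eq_univ, Set.image_univ, Subtype.range_coe]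
  have hrow_span : ∀ i0, Q i0 ∈ Submodule.span ℚ (Set.range (fun i => B i)) := by
    intro i0
    rw [hrow_range, htspan]
    exact Submodule.subset_span ⟨i0, rfl⟩
  -- the columns of B span everything
  have hBtop : Submodule.span ℚ (Set.range Bᵀ) = ⊤ := by
    have h1 : Module.finrank ℚ (Submodule.span ℚ (Set.range Bᵀ)) = r := by
      have h2 : B.rank = Bᵀ.rank := (Matrix.rank_transpose B).symm
      have h3 : B.rank = Module.finrank ℚ (Submodule.span ℚ (Set.range Bᵀ)) :=
        Matrix.rank_eq_finrank_span_cols B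
      have h4 : Bᵀ.rank = Module.finrank ℚ (Submodule.span ℚ (Set.range Bᵀᵀ)) :=
        Matrix.rank_eq_finrank_span_cols Bᵀ
      rw [Matrix.transpose_transpose] at h4
      have h5 := finrank_span_eq_card hrow_ind
      rw [Fintype.card_fin] at h5
      rw [← h3, h2, h4]
      exact h5
    apply Submodule.eq_top_of_finrank_eq
    rw [h1, Module.finrank_pi, Fintype.card_fin]
  -- choose independent columns
  obtain ⟨t2, ht2s, ht2span, ht2ind⟩ := exists_linearIndependent ℚ (Set.range Bᵀ)
  rw [hBtop] at ht2span
  haveI : Fintype t2 := (Set.Finite.subset (Set.finite_range _) ht2s).fintype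
  have hcard2 : Fintype.card t2 = r := by
    have h1 := finrank_span_eq_card ht2ind
    rw [Subtype.range_coe, ht2span, finrank_top, Module.finrank_pi, Fintype.card_fin] at h1
    exact h1.symm
  set e2 : Fin r ≃ t2 := (Fintype.equivFinOfCardEq hcard2).symm with he2
  set γ : Fin r → Fin n := fun j => (ht2s (e2 j).2).choose with hγdef
  have hγB : ∀ j, Bᵀ (γ j) = ((e2 j : Fin r → ℚ)) := fun j => (ht2s (e2 j).2).choose_spec
  have hγinj : Function.Injective γ := by
    intro j1 j2 h
    apply e2.injective
    apply Subtype.ext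
    rw [← hγB, ← hγB, h]
  set C : Matrix (Fin r) (Fin r) ℚ := B.submatrix id γ with hCdef
  have hcolC : ∀ j, Cᵀ j = ((e2 j : Fin r → ℚ)) := by
    intro j
    rw [← hγB]
    rfl
  have hcol_ind : LinearIndependent ℚ Cᵀ := by
    have : Cᵀ = (fun x : t2 => (x : Fin r → ℚ)) ∘ e2 := funext hcolC
    rw [this]
    exact ht2ind.comp e2 e2.injective
  have hcol_span : Submodule.span ℚ (Set.range Cᵀ) = ⊤ := by
    have hrg : Set.range Cᵀ = t2 := by
      ext x
      constructor
      · rintro ⟨j, rfl⟩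
        rw [hcolC]
        exact (e2 j).2
      · intro hx
        refine ⟨e2.symm ⟨x, hx⟩, ?_⟩
        rw [hcolC, Equiv.apply_symm_apply]
    rw [hrg, ht2span]
  have hdetC : C.det ≠ 0 := by
    set bC : Module.Basis (Fin r) ℚ (Fin r → ℚ) := Module.Basis.mk hcol_ind (le_of_eq hcol_span.symm) with hbC
    have h1 : IsUnit ((Pi.basisFun ℚ (Fin r)).det ⇑bC) := Module.Basis.isUnit_det _ _
    have h2 : (Pi.basisFun ℚ (Fin r)).det ⇑bC = C.det := by
      rw [Module.Basis.det_apply]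
      congr 1
      ext i j
      rw [Module.Basis.toMatrix_apply, Pi.basisFun_repr, hbC]
      exact congrFun (congrFun (Module.Basis.coe_mk hcol_ind _) j) i
    rw [h2] at h1
    exact h1.ne_zero
  set A : Matrix (Fin r) (Fin r) ℤ := M.submatrix ρ γ with hAdef
  have hCA : C = A.map (Int.cast : ℤ → ℚ) := rfl
  have hdetA : A.det ≠ 0 := by
    intro h
    apply hdetC
    have hC2 : C = (Int.castRingHom ℚ).mapMatrix A := rfl
    have hmd := RingHom.map_det (Int.castRingHom ℚ) A
    have : C.det = ((A.det : ℤ) : ℚ) := by rw [hC2, ← hmd]; rfl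
    rw [this, h, Int.cast_zero]
  -- the projection to the chosen rows
  set A' : Matrix (Fin r) (Fin n) ℤ := M.submatrix ρ id with hA'def
  set π : (Fin m → ℤ) →ₗ[ℤ] (Fin r → ℤ) := LinearMap.funLeft ℤ ℤ ρ with hπdef
  have hπM : ∀ y : Fin n → ℤ, π (M.mulVec y) = A'.mulVec y := fun y => rfl
  -- kernel property over ℚ
  have hker : ∀ yq : Fin n → ℚ, B.mulVec yq = 0 → Q.mulVec yq = 0 := by
    intro yq hyq
    set ℓ : (Fin n → ℚ) →ₗ[ℚ] ℚ :=
      { toFun := fun w => w ⬝ᵥ yq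
        map_add' := fun a b => add_dotProduct a b yq
        map_smul' := fun c a => smul_dotProduct c a yq } with hℓ
    have hsub : Submodule.span ℚ (Set.range (fun i => B i)) ≤ LinearMap.ker ℓ := by
      rw [Submodule.span_le]
      rintro _ ⟨i, rfl⟩
      have : B i ⬝ᵥ yq = 0 := congrFun hyq i
      exact this
    funext i0
    have := hsub (hrow_span i0)
    exact this
  -- kernel property over ℤ
  have hkerZ : ∀ y : Fin n → ℤ, A'.mulVec y = 0 → M.mulVec y = 0 := by
    intro y hy
    set yq : Fin n → ℚ := fun j => ((y j : ℚ)) with hyq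
    have hB : B.mulVec yq = 0 := by
      funext i
      have h0 : A'.mulVec y i = 0 := congrFun hy i
      have : B.mulVec yq i = ((A'.mulVec y i : ℤ) : ℚ) := by
        rw [Matrix.mulVec, Matrix.mulVec, dotProduct, dotProduct]
        push_cast
        rfl
      rw [this, h0, Int.cast_zero]
      rfl
    have hQ0 := hker yq hB
    funext i
    have hcast : ((M.mulVec y i : ℤ) : ℚ) = Q.mulVec yq i := by
      rw [Matrix.mulVec, Matrix.mulVec, dotProduct, dotProduct]
      push_cast
      rfl
    rw [congrFun hQ0 i, Pi.zero_apply] at hcast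
    show M.mulVec y i = (0 : Fin m → ℤ) i
    rw [Pi.zero_apply]
    exact_mod_cast hcast
  set N := LinearMap.range M.mulVecLin with hNdef
  set P := LinearMap.range A'.mulVecLin with hPdef
  have hNP : N ≤ P.comap π := by
    rintro x ⟨y, rfl⟩
    exact ⟨y, (hπM y).symm⟩
  set g := N.mapQ P π hNP with hgdef
  -- the key injectivity on the torsion submodule
  have hg0 : ∀ x : (Fin m → ℤ) ⧸ N,
      x ∈ Submodule.torsion ℤ ((Fin m → ℤ) ⧸ N) → g x = 0 → x = 0 := by
    intro x hx hgx
    obtain ⟨x, rfl⟩ := Submodule.Quotient.mk_surjective N x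
    obtain ⟨k, hk⟩ := hx
    rw [hgdef, Submodule.mapQ_apply, Submodule.Quotient.mk_eq_zero] at hgx
    obtain ⟨y, hy⟩ := hgx
    set x' := x - M.mulVec y with hx'
    have hπx' : π x' = 0 := by
      rw [hx', map_sub, hπM, ← hy]
      exact sub_self _
    have hkx : (k : ℤ) • x ∈ N := by
      rw [← Submodule.Quotient.mk_eq_zero N, Submodule.Quotient.mk_smul]
      exact hk
    have hkx' : (k : ℤ) • x' ∈ N := by
      rw [hx', smul_sub]
      exact N.sub_mem hkx (N.smul_mem _ ⟨y, rfl⟩)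
    obtain ⟨y', hy'⟩ := hkx'
    have hA'y' : A'.mulVec y' = 0 := by
      have h5 : π (M.mulVec y') = π ((k : ℤ) • x') := congrArg π hy'
      rw [hπM, _root_.map_smul, hπx', smul_zero] at h5
      exact h5
    have hMy' := hkerZ y' hA'y'
    have hkx'0 : (k : ℤ) • x' = 0 := by
      have h6 : M.mulVec y' = (k : ℤ) • x' := hy'
      rw [← h6]
      exact hMy'
    have hx'0 : x' = 0 := by
      rcases smul_eq_zero.mp hkx'0 with h | h
      · exact absurd h (nonZeroDivisors.coe_ne_zero k)
      · exact h
    have hxN : x ∈ N := by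
      have : x = M.mulVec y := by
        have := sub_eq_zero.mp hx'0
        exact this
      rw [this]
      exact ⟨y, rfl⟩
    rw [Submodule.Quotient.mk_eq_zero]
    exact hxN
  -- range A ≤ P
  have hPA : LinearMap.range A.mulVecLin ≤ P := by
    rintro _ ⟨z, rfl⟩
    refine ⟨Function.extend γ z 0, ?_⟩
    show A'.mulVec (Function.extend γ z 0) = A.mulVec z
    funext i
    rw [Matrix.mulVec, Matrix.mulVec, dotProduct, dotProduct]
    rw [← Finset.sum_subset (Finset.subset_univ (Finset.univ.image γ))]
    · rw [Finset.sum_image (fun a _ b _ h => hγinj h)]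
      refine Finset.sum_congr rfl fun j' _ => ?_
      rw [hγinj.extend_apply]
      rfl
    · intro j _ hj
      have : Function.extend γ z 0 j = 0 := by
        apply Function.extend_apply'
        intro ⟨j', hj'⟩
        exact hj (Finset.mem_image.mpr ⟨j', Finset.mem_univ _, hj'⟩)
      rw [this, mul_zero]
  -- cardinality chain
  haveI hfinA : Finite ((Fin r → ℤ) ⧸ LinearMap.range A.mulVecLin) := by
    have h := card_quot_mulVecLin A hdetA
    have : Nat.card ((Fin r → ℤ) ⧸ LinearMap.range A.mulVecLin) ≠ 0 := by
      rw [h]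
      simpa using hdetA
    exact (Nat.card_ne_zero.mp this).2
  have hPA' : LinearMap.range A.mulVecLin ≤ P.comap LinearMap.id := hPA
  set q := (LinearMap.range A.mulVecLin).mapQ P LinearMap.id hPA' with hqdef
  have hqsurj : Function.Surjective q := by
    intro z
    obtain ⟨x, rfl⟩ := Submodule.Quotient.mk_surjective P z
    exact ⟨Submodule.Quotient.mk x, by rw [hqdef, Submodule.mapQ_apply]; rfl⟩
  haveI hfinP : Finite ((Fin r → ℤ) ⧸ P) := Finite.of_surjective q hqsurj
  set T := Submodule.torsion ℤ ((Fin m → ℤ) ⧸ N) with hTdef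
  have hFinj : Function.Injective (fun x : T => g x.val) := by
    intro t1 t2 h
    apply Subtype.ext
    have h1 : g (t1.val - t2.val) = 0 := by
      rw [map_sub]
      have hh : g t1.val = g t2.val := h
      rw [hh, sub_self]
    have h2 := hg0 _ (T.sub_mem t1.2 t2.2) h1
    exact sub_eq_zero.mp h2
  have card1 : Nat.card T ≤ Nat.card ((Fin r → ℤ) ⧸ P) :=
    Nat.card_le_card_of_injective _ hFinj
  have card2 : Nat.card ((Fin r → ℤ) ⧸ P) ≤
      Nat.card ((Fin r → ℤ) ⧸ LinearMap.range A.mulVecLin) :=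
    Nat.card_le_card_of_surjective q hqsurj
  have card3 := card_quot_mulVecLin A hdetA
  have hcard : Nat.card T ≤ A.det.natAbs := by
    rw [← card3]
    exact card1.trans card2
  -- pass to ℝ
  have hR1 : (Nat.card T : ℝ) ≤ (A.det.natAbs : ℝ) := Nat.cast_le.mpr hcard
  have hR2 : ((A.det.natAbs : ℕ) : ℝ) = |((A.det : ℤ) : ℝ)| := by
    rw [Nat.cast_natAbs, Int.cast_abs]
  have hR3 : |((A.det : ℤ) : ℝ)| ≤ ∏ j : Fin r, Real.sqrt (∑ i : Fin r, ((A i j : ℝ)) ^ 2) := by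
    have hmd := RingHom.map_det (Int.castRingHom ℝ) A
    have h1 : ((A.det : ℤ) : ℝ) = ((Int.castRingHom ℝ).mapMatrix A).det := by
      rw [← hmd]; rfl
    rw [h1]
    exact hadamard_aux _
  set c : Fin n → ℝ := fun j => max 1 (Real.sqrt (∑ i : Fin m, ((M i j : ℝ)) ^ 2)) with hcdef
  have hR4 : ∏ j : Fin r, Real.sqrt (∑ i : Fin r, ((A i j : ℝ)) ^ 2) ≤ ∏ j : Fin r, c (γ j) := by
    apply Finset.prod_le_prod
    · intro j _
      exact Real.sqrt_nonneg _
    · intro j _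
      apply le_max_of_le_right
      apply Real.sqrt_le_sqrt
      have h1 : ∑ i : Fin r, ((A i j : ℝ)) ^ 2
          = ∑ i ∈ Finset.univ.image ρ, ((M i (γ j) : ℝ)) ^ 2 := by
        rw [Finset.sum_image (fun a _ b _ h => hρinj h)]
        rfl
      rw [h1]
      apply Finset.sum_le_sum_of_subset_of_nonneg (Finset.subset_univ _)
      intro i _ _
      positivity
  have hR5 : ∏ j : Fin r, c (γ j) ≤ ∏ j : Fin n, c j := by
    rw [← Finset.prod_image (fun a _ b _ h => hγinj h)]
    set s := Finset.univ.image γ with hs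
    have hsub : s ⊆ Finset.univ := Finset.subset_univ _
    have hsd := Finset.prod_sdiff (f := c) hsub
    have h1 : (1 : ℝ) ≤ ∏ j ∈ Finset.univ \ s, c j := by
      rw [show (1 : ℝ) = ∏ _j ∈ Finset.univ \ s, (1 : ℝ) from (Finset.prod_const_one).symm]
      exact Finset.prod_le_prod (fun i _ => zero_le_one) (fun i _ => le_max_left _ _)
    have h2 : (0 : ℝ) ≤ ∏ j ∈ s, c j :=
      Finset.prod_nonneg (fun i _ => le_trans zero_le_one (le_max_left _ _))
    calc ∏ j ∈ s, c j ≤ (∏ j ∈ Finset.univ \ s, c j) * ∏ j ∈ s, c j :=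
          le_mul_of_one_le_left h2 h1
      _ = ∏ j : Fin n, c j := hsd
  calc (Nat.card T : ℝ) ≤ (A.det.natAbs : ℝ) := hR1
    _ = |((A.det : ℤ) : ℝ)| := hR2
    _ ≤ ∏ j : Fin r, Real.sqrt (∑ i : Fin r, ((A i j : ℝ)) ^ 2) := hR3
    _ ≤ ∏ j : Fin r, c (γ j) := hR4
    _ ≤ ∏ j : Fin n, c j := hR5
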